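/- For the two-query instance with ads A=(p=1,b=2,z₁), B=(p=0,b=2,z₂) on query q₁ and C=(p=1,b=2,z₂), D=(p=0,b=1,z₁) on query q₂ (queries equally likely), under mechanism ONE: any efficiency-maximizing prediction map f must satisfy f(z₁) > f(z₂) > f(z₁)/2, and any such f deterministically shows A and C, giving observed CTR 1 for both buckets; since f(z₂) < f(z₁) ≤ 1 forces f(z₂) < 1, no efficiency-maximizing map is self-calibrated. -/
import Mathlib


open Classical

/- Mechanism ONE.  Two equally likely queries and two buckets z₁, z₂.
q₁ : A = (p=1, b=2, z₁), B = (p=0, b=2, z₂);  q₂ : C = (p=1, b=2, z₂), D = (p=0, b=1, z₁).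
A prediction map is a pair (f1, f2) = (f(z₁), f(z₂)).  On each query the ad with the
larger score b·f(z) shows (ties broken uniformly at random); showing ad (p,b) yields
expected value p·b. -/

/-- expected value per query of the map (f1, f2) -/
noncomputable def EV6 (f1 f2 : ℝ) : ℝ :=
  (1/2) * (if 2*f1 > 2*f2 then 2 else if 2*f2 > 2*f1 then 0 else 1)   -- q₁: A vs B
  + (1/2) * (if 2*f2 > f1 then 2 else if f1 > 2*f2 then 0 else 1)     -- q₂: C vs D

/-- show probability of ad A (given its query) -/
noncomputable def wA (f1 f2 : ℝ) : ℝ := if 2*f1 > 2*f2 then 1 else if 2*f2 > 2*f1 then 0 else 1/2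
/-- show probability of ad B -/
noncomputable def wB (f1 f2 : ℝ) : ℝ := if 2*f2 > 2*f1 then 1 else if 2*f1 > 2*f2 then 0 else 1/2
/-- show probability of ad C -/
noncomputable def wC (f1 f2 : ℝ) : ℝ := if 2*f2 > f1 then 1 else if f1 > 2*f2 then 0 else 1/2
/-- show probability of ad D -/
noncomputable def wD (f1 f2 : ℝ) : ℝ := if f1 > 2*f2 then 1 else if 2*f2 > f1 then 0 else 1/2

/-- observed CTR of bucket z₁ (ads A with p=1 and D with p=0) -/
noncomputable def obsZ1 (f1 f2 : ℝ) : ℝ :=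
  (wA f1 f2 * 1 + wD f1 f2 * 0) / (wA f1 f2 + wD f1 f2)

/-- observed CTR of bucket z₂ (ads B with p=0 and C with p=1) -/
noncomputable def obsZ2 (f1 f2 : ℝ) : ℝ :=
  (wB f1 f2 * 0 + wC f1 f2 * 1) / (wB f1 f2 + wC f1 f2)

/-- Any efficiency-maximizing prediction map `(f1,f2)` (with values in `[0,1]`) must
satisfy `f1 > f2 > f1/2`; such a map deterministically shows A and C, so the observed
CTR is 1 in both buckets; and since `f2 < f1 ≤ 1` forces `f2 < 1`, the observed CTR of
bucket z₂ differs from `f2`: no efficiency-maximizing map is self-calibrated. -/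
theorem no_efficiency_maximizing_map_is_calibrated :
    ∀ f1 f2 : ℝ, 0 ≤ f1 → f1 ≤ 1 → 0 ≤ f2 → f2 ≤ 1 →
      (∀ g1 g2 : ℝ, 0 ≤ g1 → g1 ≤ 1 → 0 ≤ g2 → g2 ≤ 1 → EV6 g1 g2 ≤ EV6 f1 f2) →
      (f1 > f2 ∧ f2 > f1 / 2) ∧
      (wA f1 f2 = 1 ∧ wC f1 f2 = 1 ∧ wB f1 f2 = 0 ∧ wD f1 f2 = 0) ∧
      (obsZ1 f1 f2 = 1 ∧ obsZ2 f1 f2 = 1) ∧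
      f2 < 1 ∧ obsZ2 f1 f2 ≠ f2 := by

  intro f1 f2 h0 h1 h2 h3 hmax
  have hval : EV6 1 (3/4) = 2 := by norm_num [EV6]
  have hge : (2:ℝ) ≤ EV6 f1 f2 := by
    have := hmax 1 (3/4) (by norm_num) (by norm_num) (by norm_num) (by norm_num)
    linarith [this, hval.symm ▸ this]
  have key : 2*f1 > 2*f2 ∧ 2*f2 > f1 := by
    by_contra h
    push_neg at h
    unfold EV6 at hge
    by_cases h1' : 2*f1 > 2*f2
    · have h2' : ¬ (2*f2 > f1) := fun hh => absurd hh (not_lt.mpr (h h1'))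
      simp only [if_pos h1', if_neg h2'] at hge
      by_cases h3' : f1 > 2*f2 <;> simp [h3'] at hge <;> linarith
    · simp only [if_neg h1'] at hge
      by_cases h4' : 2*f2 > 2*f1 <;> simp only [if_pos, if_neg, h4', if_true, if_false] at hge
      · split at hge <;> [linarith; (split at hge <;> linarith)]
      · split at hge <;> [linarith; (split at hge <;> linarith)]
  obtain ⟨k1, k2⟩ := key
  have hf12 : f1 > f2 := by linarith
  have hAD : ¬ (2*f2 > 2*f1) := by linarith
  have hD : ¬ (f1 > 2*f2) := by linarith
  have wAe : wA f1 f2 = 1 := by simp [wA, k1]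
  have wBe : wB f1 f2 = 0 := by simp [wB, k1, hAD]
  have wCe : wC f1 f2 = 1 := by simp [wC, k2]
  have wDe : wD f1 f2 = 0 := by simp [wD, k2, hD]
  have o1 : obsZ1 f1 f2 = 1 := by simp [obsZ1, wAe, wDe]
  have o2 : obsZ2 f1 f2 = 1 := by simp [obsZ2, wBe, wCe]
  have hf2 : f2 < 1 := lt_of_lt_of_le hf12 h1
  exact ⟨⟨hf12, by linarith⟩, ⟨wAe, wCe, wBe, wDe⟩, ⟨o1, o2⟩, hf2, by rw [o2]; linarith⟩
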